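/- arXiv:2512.01129 — 3 statements merged into one kernel-verified Lean document; each statement's English description precedes it below -/
import Mathlib

section
/- (Proposition 6, Appendix A.1) Define φ = (c′)⁻¹ (a well-defined strictly increasing bijection of [0,∞)), a(h,β) = φ(h·β), and R(h,β) = β·φ(h·β). Then: (1) for every (h,β) ∈ [0,1] × [0,∞), a(h,β) is the unique maximizer over a ∈ [0,∞) of h·β·a − c(a); (2) for each β ≥ 0, the map h ↦ a(h,β) is concave on [0,1]; (3) a has increasing differences: a(h₂,β₂) − a(h₁,β₂) ≥ a(h₂,β₁) − a(h₁,β₁) whenever 0 ≤ h₁ ≤ h₂ ≤ 1 and 0 ≤ β₁ ≤ β₂; (4) R has strictly increasing differences: R(h₂,β₂) − R(h₁,β₂) > R(h₂,β₁) − R(h₁,β₁) whenever 0 ≤ h₁ < h₂ ≤ 1 and 0 ≤ β₁ < β₂. -/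
open Set Filter

theorem stmt_15
    -- effort cost c with derivatives c', c'', c''' on [0,∞)
    (c c' c'' c''' : ℝ → ℝ)
    (hc' : ∀ a ∈ Ici (0:ℝ), HasDerivWithinAt c (c' a) (Ici 0) a)
    (hc'' : ∀ a ∈ Ici (0:ℝ), HasDerivWithinAt c' (c'' a) (Ici 0) a)
    (hc''' : ∀ a ∈ Ici (0:ℝ), HasDerivWithinAt c'' (c''' a) (Ici 0) a)
    (hc'''cont : ContinuousOn c''' (Ici 0))
    (hc'0 : c' 0 = 0)
    (hc''pos : ∀ a ∈ Ici (0:ℝ), 0 < c'' a)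
    (hc'top : Tendsto c' atTop atTop)
    (hc'''nn : ∀ a > (0:ℝ), 0 ≤ c''' a)
    (hc'''le : ∀ a > (0:ℝ), c''' a * c' a ≤ (c'' a) ^ 2)
    -- φ = (c')⁻¹, a strictly increasing bijection of [0,∞)
    (φ : ℝ → ℝ)
    (hφmem : ∀ y ∈ Ici (0:ℝ), φ y ∈ Ici (0:ℝ))
    (hφright : ∀ y ∈ Ici (0:ℝ), c' (φ y) = y)
    (hφleft : ∀ a ∈ Ici (0:ℝ), φ (c' a) = a) :
    -- (1) a(h,β) = φ(h·β) is the unique maximizer of a ↦ h·β·a − c(a) on [0,∞)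
    (∀ h ∈ Icc (0:ℝ) 1, ∀ β ∈ Ici (0:ℝ),
      IsMaxOn (fun x => h * β * x - c x) (Ici 0) (φ (h * β)) ∧
      ∀ x ∈ Ici (0:ℝ), IsMaxOn (fun y => h * β * y - c y) (Ici 0) x → x = φ (h * β)) ∧
    -- (2) h ↦ a(h,β) is concave on [0,1]
    (∀ β ∈ Ici (0:ℝ), ConcaveOn ℝ (Icc 0 1) (fun h => φ (h * β))) ∧
    -- (3) a has increasing differences in (h,β)
    (∀ h₁ h₂ β₁ β₂ : ℝ, 0 ≤ h₁ → h₁ ≤ h₂ → h₂ ≤ 1 → 0 ≤ β₁ → β₁ ≤ β₂ →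
      φ (h₂ * β₁) - φ (h₁ * β₁) ≤ φ (h₂ * β₂) - φ (h₁ * β₂)) ∧
    -- (4) R(h,β) = β·φ(h·β) has strictly increasing differences in (h,β)
    (∀ h₁ h₂ β₁ β₂ : ℝ, 0 ≤ h₁ → h₁ < h₂ → h₂ ≤ 1 → 0 ≤ β₁ → β₁ < β₂ →
      β₁ * φ (h₂ * β₁) - β₁ * φ (h₁ * β₁) < β₂ * φ (h₂ * β₂) - β₂ * φ (h₁ * β₂)) := by
  -- Basic continuity facts
  have hccont : ContinuousOn c (Ici 0) := fun a ha => (hc' a ha).continuousWithinAt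
  have hc'cont : ContinuousOn c' (Ici 0) := fun a ha => (hc'' a ha).continuousWithinAt
  have hc''cont : ContinuousOn c'' (Ici 0) := fun a ha => (hc''' a ha).continuousWithinAt
  -- Derivatives at interior points
  have hcat : ∀ x : ℝ, 0 < x → HasDerivAt c (c' x) x :=
    fun x hx => (hc' x hx.le).hasDerivAt (Ici_mem_nhds hx)
  have hc'at : ∀ x : ℝ, 0 < x → HasDerivAt c' (c'' x) x :=
    fun x hx => (hc'' x hx.le).hasDerivAt (Ici_mem_nhds hx)
  have hc''at : ∀ x : ℝ, 0 < x → HasDerivAt c'' (c''' x) x :=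
    fun x hx => (hc''' x hx.le).hasDerivAt (Ici_mem_nhds hx)
  -- c' is strictly increasing on [0,∞)
  have hc'smono : StrictMonoOn c' (Ici 0) := by
    apply strictMonoOn_of_hasDerivWithinAt_pos (convex_Ici 0) hc'cont
    · intro x hx
      rw [interior_Ici] at hx
      exact ((hc'at x hx).hasDerivWithinAt)
    · intro x hx
      rw [interior_Ici] at hx
      exact hc''pos x (mem_Ici.mpr hx.le)
  have hc'nonneg : ∀ a : ℝ, 0 ≤ a → 0 ≤ c' a := by
    intro a ha
    rcases eq_or_lt_of_le ha with h | h
    · rw [← h, hc'0]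
    · rw [← hc'0]; exact (hc'smono self_mem_Ici ha h).le
  have hc'pos : ∀ a : ℝ, 0 < a → 0 < c' a := by
    intro a ha
    rw [← hc'0]; exact hc'smono self_mem_Ici ha.le ha
  -- φ facts
  have hφ0 : φ 0 = 0 := by
    have := hφleft 0 self_mem_Ici
    rwa [hc'0] at this
  have hφmono : ∀ y₁ ∈ Ici (0:ℝ), ∀ y₂ ∈ Ici (0:ℝ), y₁ ≤ y₂ → φ y₁ ≤ φ y₂ := by
    intro y₁ hy₁ y₂ hy₂ hle
    by_contra hcon
    push_neg at hcon
    have := hc'smono (hφmem y₂ hy₂) (hφmem y₁ hy₁) hcon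
    rw [hφright y₁ hy₁, hφright y₂ hy₂] at this
    linarith
  have hφsmono : ∀ y₁ ∈ Ici (0:ℝ), ∀ y₂ ∈ Ici (0:ℝ), y₁ < y₂ → φ y₁ < φ y₂ := by
    intro y₁ hy₁ y₂ hy₂ hlt
    by_contra hcon
    push_neg at hcon
    have := hc'smono.monotoneOn (hφmem y₂ hy₂) (hφmem y₁ hy₁) hcon
    rw [hφright y₁ hy₁, hφright y₂ hy₂] at this
    linarith
  have hφpos : ∀ y : ℝ, 0 < y → 0 < φ y := by
    intro y hy
    have := hφsmono 0 self_mem_Ici y hy.le hy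
    rwa [hφ0] at this
  -- strict gradient inequality (strict convexity of c)
  have hgrad : ∀ a₀ ∈ Ici (0:ℝ), ∀ x ∈ Ici (0:ℝ), x ≠ a₀ →
      c' a₀ * (x - a₀) < c x - c a₀ := by
    intro a₀ ha₀ x hx hne
    rcases lt_or_gt_of_ne hne with hlt | hlt
    · -- x < a₀
      obtain ⟨ξ, hξ, hslope⟩ := exists_hasDerivAt_eq_slope c c' hlt
        (hccont.mono (Icc_subset_Ici_self.trans (Ici_subset_Ici.mpr hx)))
        (fun z hz => hcat z (lt_of_le_of_lt hx hz.1))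
      rw [eq_div_iff (by linarith : a₀ - x ≠ 0)] at hslope
      have hc'lt : c' ξ < c' a₀ :=
        hc'smono (le_trans hx hξ.1.le) ha₀ hξ.2
      nlinarith [hξ.1, hξ.2]
    · -- a₀ < x
      obtain ⟨ξ, hξ, hslope⟩ := exists_hasDerivAt_eq_slope c c' hlt
        (hccont.mono (Icc_subset_Ici_self.trans (Ici_subset_Ici.mpr ha₀)))
        (fun z hz => hcat z (lt_of_le_of_lt ha₀ hz.1))
      rw [eq_div_iff (by linarith : x - a₀ ≠ 0)] at hslope
      have hc'lt : c' a₀ < c' ξ :=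
        hc'smono ha₀ (le_trans ha₀ hξ.1.le) hξ.1
      nlinarith [hξ.1, hξ.2]
  -- Part (1)
  have part1 : ∀ h ∈ Icc (0:ℝ) 1, ∀ β ∈ Ici (0:ℝ),
      IsMaxOn (fun x => h * β * x - c x) (Ici 0) (φ (h * β)) ∧
      ∀ x ∈ Ici (0:ℝ), IsMaxOn (fun y => h * β * y - c y) (Ici 0) x → x = φ (h * β) := by
    intro h hh β hβ
    have hhβ : 0 ≤ h * β := mul_nonneg hh.1 hβ
    set a₀ := φ (h * β) with ha₀def
    have ha₀mem : a₀ ∈ Ici (0:ℝ) := hφmem _ hhβ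
    have hc'a₀ : c' a₀ = h * β := hφright _ hhβ
    have hmax : IsMaxOn (fun x => h * β * x - c x) (Ici 0) a₀ := by
      intro x hx
      simp only [mem_setOf_eq]
      by_cases hne : x = a₀
      · rw [hne]
      · have := hgrad a₀ ha₀mem x hx hne
        rw [hc'a₀] at this
        nlinarith
    refine ⟨hmax, ?_⟩
    intro x hx hxmax
    by_contra hne
    have h1 : h * β * a₀ - c a₀ ≤ h * β * x - c x := hxmax ha₀mem
    have h2 := hgrad a₀ ha₀mem x hx hne
    rw [hc'a₀] at h2
    nlinarith
  -- c'' is monotone on [0,∞)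
  have hc''mono : MonotoneOn c'' (Ici 0) := by
    apply monotoneOn_of_hasDerivWithinAt_nonneg (convex_Ici 0) hc''cont
    · intro x hx
      rw [interior_Ici] at hx
      exact (hc''at x hx).hasDerivWithinAt
    · intro x hx
      rw [interior_Ici] at hx
      exact hc'''nn x hx
  -- c' is convex on [0,∞)
  have hc'conv : ConvexOn ℝ (Ici 0) c' := by
    apply MonotoneOn.convexOn_of_deriv (convex_Ici 0) hc'cont
    · intro x hx
      rw [interior_Ici] at hx
      exact (hc'at x hx).differentiableAt.differentiableWithinAt
    · intro x hx y hy hxy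
      rw [interior_Ici] at hx hy
      rw [(hc'at x hx).deriv, (hc'at y hy).deriv]
      exact hc''mono (mem_Ici.mpr hx.le) (mem_Ici.mpr hy.le) hxy
  -- φ is concave on [0,∞)
  have hφconc : ConcaveOn ℝ (Ici 0) φ := by
    refine ⟨convex_Ici 0, ?_⟩
    intro y₁ hy₁ y₂ hy₂ t s ht hs hts
    simp only [smul_eq_mul]
    set A := t * φ y₁ + s * φ y₂ with hA
    have hAmem : A ∈ Ici (0:ℝ) := by
      have h1 := hφmem y₁ hy₁
      have h2 := hφmem y₂ hy₂
      simp only [mem_Ici] at h1 h2 ⊢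
      positivity
    have hc'A : c' A ≤ t * y₁ + s * y₂ := by
      have := hc'conv.2 (hφmem y₁ hy₁) (hφmem y₂ hy₂) ht hs hts
      simp only [smul_eq_mul] at this
      rw [hφright y₁ hy₁, hφright y₂ hy₂] at this
      exact this
    have hc'Amem : c' A ∈ Ici (0:ℝ) := hc'nonneg A hAmem
    have hsum : t * y₁ + s * y₂ ∈ Ici (0:ℝ) := by
      simp only [mem_Ici] at hy₁ hy₂ ⊢
      positivity
    have := hφmono (c' A) hc'Amem (t * y₁ + s * y₂) hsum hc'A
    rwa [hφleft A hAmem] at this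
  -- Part (2)
  have part2 : ∀ β ∈ Ici (0:ℝ), ConcaveOn ℝ (Icc 0 1) (fun h => φ (h * β)) := by
    intro β hβ
    refine ⟨convex_Icc 0 1, ?_⟩
    intro h₁ hh₁ h₂ hh₂ t s ht hs hts
    simp only [smul_eq_mul]
    have e : (t * h₁ + s * h₂) * β = t * (h₁ * β) + s * (h₂ * β) := by ring
    rw [e]
    have := hφconc.2 (mul_nonneg hh₁.1 hβ : h₁ * β ∈ Ici (0:ℝ))
      (mul_nonneg hh₂.1 hβ : h₂ * β ∈ Ici (0:ℝ)) ht hs hts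
    simpa only [smul_eq_mul] using this
  -- concavity of log ∘ c' on (0,∞)
  have hQanti : AntitoneOn (fun a => c'' a / c' a) (Ioi 0) := by
    apply antitoneOn_of_hasDerivWithinAt_nonpos (convex_Ioi 0)
      (f' := fun a => (c''' a * c' a - c'' a * c'' a) / (c' a) ^ 2)
    · exact (hc''cont.mono Ioi_subset_Ici_self).div (hc'cont.mono Ioi_subset_Ici_self)
        (fun x hx => (hc'pos x hx).ne')
    · intro x hx
      rw [interior_Ioi] at hx
      exact ((hc''at x hx).div (hc'at x hx) (hc'pos x hx).ne').hasDerivWithinAt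
    · intro x hx
      rw [interior_Ioi] at hx
      apply div_nonpos_of_nonpos_of_nonneg
      · have := hc'''le x hx
        nlinarith
      · positivity
  have hLat : ∀ x : ℝ, 0 < x → HasDerivAt (fun a => Real.log (c' a)) (c'' x / c' x) x := by
    intro x hx
    have := (Real.hasDerivAt_log (hc'pos x hx).ne').comp x (hc'at x hx)
    simpa [div_eq_inv_mul, Function.comp_def] using this
  have hLconc : ConcaveOn ℝ (Ioi 0) (fun a => Real.log (c' a)) := by
    apply AntitoneOn.concaveOn_of_deriv (convex_Ioi 0)
    · exact (hc'cont.mono Ioi_subset_Ici_self).log (fun x hx => (hc'pos x hx).ne')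
    · intro x hx
      rw [interior_Ioi] at hx
      exact (hLat x hx).differentiableAt.differentiableWithinAt
    · intro x hx y hy hxy
      rw [interior_Ioi] at hx hy
      rw [(hLat x hx).deriv, (hLat y hy).deriv]
      exact hQanti hx hy hxy
  -- positivity of convex combinations
  have hcomb : ∀ u v w : ℝ, 0 < u → 0 < v → 0 ≤ w → w ≤ 1 → 0 < w * u + (1 - w) * v := by
    intro u v w hu hv hw hw1
    rcases le_total u v with h | h <;> nlinarith
  -- key lemma: multiplicative increasing differences of φ
  have hkey : ∀ x₁ x₂ x₃ x₄ : ℝ, 0 < x₁ → x₁ ≤ x₂ → x₂ ≤ x₄ → x₁ ≤ x₃ → x₃ ≤ x₄ →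
      x₁ * x₄ = x₂ * x₃ → φ x₂ + φ x₃ ≤ φ x₁ + φ x₄ := by
    intro x₁ x₂ x₃ x₄ hx₁ h12 h24 h13 h34 hprod
    have hx₂ : 0 < x₂ := lt_of_lt_of_le hx₁ h12
    have hx₃ : 0 < x₃ := lt_of_lt_of_le hx₁ h13
    have hx₄ : 0 < x₄ := lt_of_lt_of_le hx₂ h24
    rcases eq_or_lt_of_le (h12.trans h24) with heq | h14
    · -- x₁ = x₄, so all equal
      have e2 : x₂ = x₁ := le_antisymm (heq ▸ h24) h12
      have e3 : x₃ = x₁ := le_antisymm (heq ▸ h34) h13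
      rw [e2, e3, ← heq]
    · set s₁ := Real.log x₁
      set s₂ := Real.log x₂
      set s₃ := Real.log x₃
      set s₄ := Real.log x₄
      have hs12 : s₁ ≤ s₂ := Real.log_le_log hx₁ h12
      have hs24 : s₂ ≤ s₄ := Real.log_le_log hx₂ h24
      have hs14 : s₁ < s₄ := Real.log_lt_log hx₁ h14
      have hssum : s₁ + s₄ = s₂ + s₃ := by
        rw [← Real.log_mul hx₁.ne' hx₄.ne', ← Real.log_mul hx₂.ne' hx₃.ne', hprod]
      set t := (s₄ - s₂) / (s₄ - s₁) with htdef
      have hden : (0:ℝ) < s₄ - s₁ := by linarith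
      have ht0 : 0 ≤ t := div_nonneg (by linarith) hden.le
      have ht1 : t ≤ 1 := by
        rw [div_le_one hden]; linarith
      have hts₂ : t * s₁ + (1 - t) * s₄ = s₂ := by
        field_simp [htdef]
        have := div_mul_cancel₀ (s₄ - s₂) hden.ne'
        rw [← htdef] at this
        linear_combination -this
      have hts₃ : (1 - t) * s₁ + t * s₄ = s₃ := by
        field_simp [htdef]
        nlinarith [hssum]
      set a₁ := φ x₁
      set a₄ := φ x₄
      have ha₁ : 0 < a₁ := hφpos x₁ hx₁
      have ha₄ : 0 < a₄ := hφpos x₄ hx₄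
      have hLa₁ : Real.log (c' a₁) = s₁ := by rw [hφright x₁ hx₁.le]
      have hLa₄ : Real.log (c' a₄) = s₄ := by rw [hφright x₄ hx₄.le]
      -- first combination
      have hstep : ∀ w : ℝ, 0 ≤ w → w ≤ 1 →
          φ (Real.exp (w * s₁ + (1 - w) * s₄)) ≤ w * a₁ + (1 - w) * a₄ := by
        intro w hw hw1
        set b := w * a₁ + (1 - w) * a₄ with hb
        have hbpos : 0 < b := hcomb a₁ a₄ w ha₁ ha₄ hw hw1
        have hconc := hLconc.2 (mem_Ioi.mpr ha₁) (mem_Ioi.mpr ha₄) hw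
          (by linarith : (0:ℝ) ≤ 1 - w) (by ring)
        simp only [smul_eq_mul] at hconc
        rw [hLa₁, hLa₄] at hconc
        -- hconc : w * s₁ + (1-w) * s₄ ≤ log (c' b)
        have hc'b : 0 < c' b := hc'pos b hbpos
        have hexp : Real.exp (w * s₁ + (1 - w) * s₄) ≤ c' b := by
          calc Real.exp (w * s₁ + (1 - w) * s₄) ≤ Real.exp (Real.log (c' b)) :=
                Real.exp_le_exp.mpr hconc
            _ = c' b := Real.exp_log hc'b
        have := hφmono _ (Real.exp_pos _).le _ (hc'nonneg b hbpos.le) hexp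
        rwa [hφleft b hbpos.le] at this
      have h2' := hstep t ht0 ht1
      have h3' := hstep (1 - t) (by linarith) (by linarith)
      rw [hts₂] at h2'
      have e3 : (1 - t) * s₁ + (1 - (1 - t)) * s₄ = s₃ := by
        rw [← hts₃]; ring
      rw [e3] at h3'
      rw [Real.exp_log hx₂] at h2'
      rw [Real.exp_log hx₃] at h3'
      have : φ x₂ + φ x₃ ≤ (t * a₁ + (1 - t) * a₄) + ((1 - t) * a₁ + (1 - (1 - t)) * a₄) := by
        linarith
      calc φ x₂ + φ x₃ ≤ _ := this
        _ = a₁ + a₄ := by ring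
  -- Part (3)
  have part3 : ∀ h₁ h₂ β₁ β₂ : ℝ, 0 ≤ h₁ → h₁ ≤ h₂ → h₂ ≤ 1 → 0 ≤ β₁ → β₁ ≤ β₂ →
      φ (h₂ * β₁) - φ (h₁ * β₁) ≤ φ (h₂ * β₂) - φ (h₁ * β₂) := by
    intro h₁ h₂ β₁ β₂ hh₁ hh₁₂ hh₂ hβ₁ hβ₁₂
    have hβ₂ : 0 ≤ β₂ := le_trans hβ₁ hβ₁₂
    have hh₂0 : 0 ≤ h₂ := le_trans hh₁ hh₁₂
    rcases eq_or_lt_of_le hβ₁ with hβ₁0 | hβ₁0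
    · -- β₁ = 0
      rw [← hβ₁0]
      simp only [mul_zero, sub_self]
      have := hφmono (h₁ * β₂) (mul_nonneg hh₁ hβ₂) (h₂ * β₂) (mul_nonneg hh₂0 hβ₂)
        (mul_le_mul_of_nonneg_right hh₁₂ hβ₂)
      linarith
    rcases eq_or_lt_of_le hh₁ with hh₁0 | hh₁0
    · -- h₁ = 0
      rw [← hh₁0]
      simp only [zero_mul]
      have := hφmono (h₂ * β₁) (mul_nonneg hh₂0 hβ₁) (h₂ * β₂) (mul_nonneg hh₂0 hβ₂)
        (mul_le_mul_of_nonneg_left hβ₁₂ hh₂0)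
      linarith
    · have := hkey (h₁ * β₁) (h₂ * β₁) (h₁ * β₂) (h₂ * β₂)
        (mul_pos hh₁0 hβ₁0)
        (mul_le_mul_of_nonneg_right hh₁₂ hβ₁)
        (mul_le_mul_of_nonneg_left hβ₁₂ hh₂0)
        (mul_le_mul_of_nonneg_left hβ₁₂ hh₁)
        (mul_le_mul_of_nonneg_right hh₁₂ hβ₂)
        (by ring)
      linarith
  refine ⟨part1, part2, part3, ?_⟩
  -- Part (4)
  intro h₁ h₂ β₁ β₂ hh₁ hlt hh₂ hβ₁ hblt
  have hβ₂ : 0 < β₂ := lt_of_le_of_lt hβ₁ hblt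
  have hh₂0 : 0 ≤ h₂ := le_trans hh₁ hlt.le
  have hΔ₂ : 0 < φ (h₂ * β₂) - φ (h₁ * β₂) := by
    have := hφsmono (h₁ * β₂) (mul_nonneg hh₁ hβ₂.le) (h₂ * β₂) (mul_nonneg hh₂0 hβ₂.le)
      (mul_lt_mul_of_pos_right hlt hβ₂)
    linarith
  have h3 := part3 h₁ h₂ β₁ β₂ hh₁ hlt.le hh₂ hβ₁ hblt.le
  nlinarith [mul_le_mul_of_nonneg_left h3 hβ₁, mul_lt_mul_of_pos_right hblt hΔ₂]
end

section
/- (Proposition 7, Appendix A.2: Assumption 2 holds generically) There exists a set C ⊂ ℝ of Lebesgue measure zero such that for every Δ ∉ C, every fixed point of ψ̃_Δ in [βlo, βhi] is a strict crossing of the diagonal. -/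
open Set

/-- `F` crosses the diagonal strictly from above at `x` (within the interval `[a,b]`). -/
def CrossesFromAbove (F : ℝ → ℝ) (a b x : ℝ) : Prop :=
  ∃ ε > 0, (∀ t ∈ Ioo (x - ε) x ∩ Icc a b, t < F t) ∧
    (∀ t ∈ Ioo x (x + ε) ∩ Icc a b, F t < t)

/-- `F` crosses the diagonal strictly from below at `x` (within the interval `[a,b]`). -/
def CrossesFromBelow (F : ℝ → ℝ) (a b x : ℝ) : Prop :=
  ∃ ε > 0, (∀ t ∈ Ioo (x - ε) x ∩ Icc a b, F t < t) ∧
    (∀ t ∈ Ioo x (x + ε) ∩ Icc a b, t < F t)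

theorem stmt_16
    (βlo βstar βhi : ℝ)
    (hlo : 0 < βlo) (hls : βlo < βstar) (hsh : βstar < βhi)
    (R : ℝ → ℝ → ℝ)
    (hRcont : ContinuousOn (fun p : ℝ × ℝ => R p.1 p.2) (Icc (0:ℝ) 1 ×ˢ Ici (0:ℝ)))
    (hR0 : ∀ h ∈ Icc (0:ℝ) 1, R h 0 = 0)
    (hR0' : ∀ β ∈ Ici (0:ℝ), R 0 β = 0)
    (hRβ : ∀ h ∈ Ioc (0:ℝ) 1, StrictMonoOn (fun β => R h β) (Ici 0))
    (hRh : ∀ β > (0:ℝ), StrictMonoOn (fun h => R h β) (Icc 0 1))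
    (hRid : ∀ h₁ h₂ β₁ β₂ : ℝ, 0 ≤ h₁ → h₁ < h₂ → h₂ ≤ 1 → 0 ≤ β₁ → β₁ < β₂ →
      R h₂ β₁ - R h₁ β₁ < R h₂ β₂ - R h₁ β₂)
    -- R and H are continuously differentiable, with ∂R/∂β > 0
    (hRdiff : ContDiffOn ℝ 1 (fun p : ℝ × ℝ => R p.1 p.2) (Icc (0:ℝ) 1 ×ˢ Ici (0:ℝ)))
    (hRβderiv : ∀ h ∈ Ioc (0:ℝ) 1, ∀ β > (0:ℝ), ∃ d > (0:ℝ),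
      HasDerivAt (fun β' => R h β') d β)
    (H : ℝ → ℝ)
    (hHcont : ContinuousOn H (Ici 0))
    (hHdiff : ContDiffOn ℝ 1 H (Ici 0))
    (hHmono : StrictMonoOn H (Ici 0))
    (hH0 : H 0 = 0)
    (hHin : ∀ β > (0:ℝ), H β ∈ Ioo (0:ℝ) 1)
    (ψ : ℝ → ℝ → ℝ)
    (hψ : ∀ Δ : ℝ, ∀ β ∈ Icc βlo βhi,
      ψ Δ β ∈ Icc βlo βhi ∧
      ∀ x ∈ Icc βlo βhi, x ≠ ψ Δ β →
        |Δ + R (H β) (ψ Δ β) - R (H β) βstar| < |Δ + R (H β) x - R (H β) βstar|) :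
    ∃ C : Set ℝ, MeasureTheory.volume C = 0 ∧
      ∀ Δ : ℝ, Δ ∉ C → ∀ bhat ∈ Icc βlo βhi, ψ Δ bhat = bhat →
        CrossesFromAbove (ψ Δ) βlo βhi bhat ∨ CrossesFromBelow (ψ Δ) βlo βhi bhat := by
  have hstar : (0:ℝ) < βstar := hlo.trans hls
  have hlh : βlo < βhi := hls.trans hsh
  set φ : ℝ → ℝ := fun β => R (H β) βstar - R (H β) β with hφdef
  -- basic positivity facts
  have hβpos : ∀ β ∈ Icc βlo βhi, (0:ℝ) < β := fun β hβ => hlo.trans_le hβ.1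
  have hHβ : ∀ β ∈ Icc βlo βhi, H β ∈ Ioo (0:ℝ) 1 := fun β hβ => hHin β (hβpos β hβ)
  -- strict monotonicity of x ↦ R (H β) x
  have monoR : ∀ β ∈ Icc βlo βhi, StrictMonoOn (fun x => R (H β) x) (Ici 0) :=
    fun β hβ => hRβ _ ⟨(hHβ β hβ).1, (hHβ β hβ).2.le⟩
  -- continuity of x ↦ R (H β) x on Ici 0
  have contR : ∀ β ∈ Icc βlo βhi, ContinuousOn (fun x => R (H β) x) (Ici 0) := by
    intro β hβ
    have : ContinuousOn (fun x : ℝ => (H β, x)) (Ici 0) :=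
      (continuous_const.prodMk continuous_id).continuousOn
    exact hRcont.comp this (fun x hx => ⟨⟨(hHβ β hβ).1.le, (hHβ β hβ).2.le⟩, hx⟩)
  -- sign lemma (positive case)
  have signPos : ∀ Δ : ℝ, ∀ β ∈ Icc βlo βhi, βlo < β →
      0 < Δ + R (H β) β - R (H β) βstar → ψ Δ β < β := by
    intro Δ β hβ hβlo hv
    obtain ⟨hmem, hmin⟩ := hψ Δ β hβ
    by_contra hcon
    push_neg at hcon
    rcases eq_or_lt_of_le hcon with heq | hlt
    · -- ψ Δ β = β : find x slightly below β
      have hc : ContinuousWithinAt (fun x => R (H β) x) (Ici 0) β :=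
        contR β hβ β (le_of_lt (hβpos β hβ))
      rw [Metric.continuousWithinAt_iff] at hc
      obtain ⟨δ, hδpos, hδ⟩ := hc _ hv
      set x := max βlo (β - δ/2) with hxdef
      have hxβ : x < β := max_lt hβlo (by linarith)
      have hxI : x ∈ Icc βlo βhi := ⟨le_max_left _ _, le_trans hxβ.le hβ.2⟩
      have hx0 : x ∈ Ici (0:ℝ) := le_trans hlo.le hxI.1
      have hdist : dist x β < δ := by
        rw [Real.dist_eq, abs_of_nonpos (by linarith)]
        have : β - δ/2 ≤ x := le_max_right _ _
        linarith
      have hgx : dist (R (H β) x) (R (H β) β) < Δ + R (H β) β - R (H β) βstar :=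
        hδ hx0 hdist
      rw [Real.dist_eq, abs_lt] at hgx
      have hgxpos : 0 < Δ + R (H β) x - R (H β) βstar := by linarith
      have hgxlt : R (H β) x < R (H β) β :=
        monoR β hβ hx0 (le_of_lt (hβpos β hβ)) hxβ
      have := hmin x hxI (by rw [← heq]; exact ne_of_lt hxβ)
      rw [← heq] at this
      rw [abs_of_pos hv, abs_of_pos hgxpos] at this
      linarith
    · -- β < ψ Δ β
      have h2 := hmin β hβ (ne_of_lt hlt)
      have hmono : R (H β) β < R (H β) (ψ Δ β) :=
        monoR β hβ (le_of_lt (hβpos β hβ)) (le_of_lt (hβpos _ hmem)) hlt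
      have hvψ : 0 < Δ + R (H β) (ψ Δ β) - R (H β) βstar := by linarith
      rw [abs_of_pos hvψ, abs_of_pos hv] at h2
      linarith
  -- sign lemma (negative case)
  have signNeg : ∀ Δ : ℝ, ∀ β ∈ Icc βlo βhi, β < βhi →
      Δ + R (H β) β - R (H β) βstar < 0 → β < ψ Δ β := by
    intro Δ β hβ hβhi hv
    obtain ⟨hmem, hmin⟩ := hψ Δ β hβ
    by_contra hcon
    push_neg at hcon
    rcases eq_or_lt_of_le hcon with heq | hlt
    · -- ψ Δ β = β : find x slightly above β
      have hc : ContinuousWithinAt (fun x => R (H β) x) (Ici 0) β :=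
        contR β hβ β (le_of_lt (hβpos β hβ))
      rw [Metric.continuousWithinAt_iff] at hc
      obtain ⟨δ, hδpos, hδ⟩ := hc _ (neg_pos.2 hv)
      set x := min βhi (β + δ/2) with hxdef
      have hxβ : β < x := lt_min hβhi (by linarith)
      have hxI : x ∈ Icc βlo βhi := ⟨le_trans hβ.1 hxβ.le, min_le_left _ _⟩
      have hx0 : x ∈ Ici (0:ℝ) := le_trans hlo.le hxI.1
      have hdist : dist x β < δ := by
        rw [Real.dist_eq, abs_of_nonneg (by linarith)]
        have : x ≤ β + δ/2 := min_le_right _ _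
        linarith
      have hgx : dist (R (H β) x) (R (H β) β) < -(Δ + R (H β) β - R (H β) βstar) :=
        hδ hx0 hdist
      rw [Real.dist_eq, abs_lt] at hgx
      have hgxneg : Δ + R (H β) x - R (H β) βstar < 0 := by linarith
      have hgxgt : R (H β) β < R (H β) x :=
        monoR β hβ (le_of_lt (hβpos β hβ)) hx0 hxβ
      have := hmin x hxI (by rw [heq]; exact (ne_of_lt hxβ).symm)
      rw [heq] at this
      rw [abs_of_neg hv, abs_of_neg hgxneg] at this
      linarith
    · -- ψ Δ β < β
      have h2 := hmin β hβ (ne_of_gt hlt)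
      have hmono : R (H β) (ψ Δ β) < R (H β) β :=
        monoR β hβ (le_of_lt (hβpos _ hmem)) (le_of_lt (hβpos β hβ)) hlt
      have hvψ : Δ + R (H β) (ψ Δ β) - R (H β) βstar < 0 := by linarith
      rw [abs_of_neg hvψ, abs_of_neg hv] at h2
      linarith
  -- differentiability of φ at every β > 0
  have hφdiff : ∀ β : ℝ, 0 < β → DifferentiableAt ℝ φ β := by
    intro β hβ
    have hHb := hHin β hβ
    have hH : DifferentiableAt ℝ H β :=
      ((hHdiff.differentiableOn one_ne_zero) β (le_of_lt hβ)).differentiableAt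
        (Ici_mem_nhds hβ)
    have hnbhd : ∀ x : ℝ, 0 < x → (Icc (0:ℝ) 1 ×ˢ Ici (0:ℝ)) ∈ nhds ((H β, x) : ℝ × ℝ) := by
      intro x hx
      exact prod_mem_nhds (Icc_mem_nhds hHb.1 hHb.2) (Ici_mem_nhds hx)
    have hmem : ∀ x : ℝ, 0 ≤ x → ((H β, x) : ℝ × ℝ) ∈ Icc (0:ℝ) 1 ×ˢ Ici (0:ℝ) :=
      fun x hx => ⟨⟨hHb.1.le, hHb.2.le⟩, hx⟩
    have hR1 : DifferentiableAt ℝ (fun p : ℝ × ℝ => R p.1 p.2) ((H β, βstar) : ℝ × ℝ) :=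
      ((hRdiff.differentiableOn one_ne_zero) _ (hmem βstar hstar.le)).differentiableAt
        (hnbhd βstar hstar)
    have hR2 : DifferentiableAt ℝ (fun p : ℝ × ℝ => R p.1 p.2) ((H β, β) : ℝ × ℝ) :=
      ((hRdiff.differentiableOn one_ne_zero) _ (hmem β hβ.le)).differentiableAt
        (hnbhd β hβ)
    have h1 : DifferentiableAt ℝ ((fun p : ℝ × ℝ => R p.1 p.2) ∘ (fun b : ℝ => (H b, βstar))) β :=
      DifferentiableAt.comp β hR1 (hH.prodMk (differentiableAt_const βstar))
    have h2 : DifferentiableAt ℝ ((fun p : ℝ × ℝ => R p.1 p.2) ∘ (fun b : ℝ => (H b, b))) β :=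
      DifferentiableAt.comp β hR2 (hH.prodMk differentiableAt_id)
    exact h1.sub h2
  -- the exceptional set
  set S : Set ℝ := {β | β ∈ Icc βlo βhi ∧ deriv φ β = 0} with hSdef
  refine ⟨φ '' S ∪ {φ βlo, φ βhi}, ?_, ?_⟩
  · -- measure zero
    apply MeasureTheory.measure_union_null
    · apply MeasureTheory.addHaar_image_eq_zero_of_det_fderivWithin_eq_zero
        (f' := fun _ => (0 : ℝ →L[ℝ] ℝ))
      · intro x hx
        have hd : HasDerivAt φ 0 x := by
          have := (hφdiff x (hβpos x hx.1)).hasDerivAt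
          rwa [hx.2] at this
        have h0 : ContinuousLinearMap.toSpanSingleton ℝ (0:ℝ) = 0 := by
          ext y; simp
        have h1 := hd.hasFDerivAt.hasFDerivWithinAt (s := S)
        rwa [h0] at h1
      · intro x _
        show ContinuousLinearMap.det (0 : ℝ →L[ℝ] ℝ) = 0
        show LinearMap.det ((0 : ℝ →L[ℝ] ℝ) : ℝ →ₗ[ℝ] ℝ) = 0
        rw [show ((0 : ℝ →L[ℝ] ℝ) : ℝ →ₗ[ℝ] ℝ) = 0 from rfl, LinearMap.det_zero]
        simp
    · exact ((Set.finite_singleton (φ βhi)).insert (φ βlo)).countable.measure_zero _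
  · -- main statement
    intro Δ hΔ bhat hbhat hfix
    have hΔ1 : Δ ∉ φ '' S := fun h => hΔ (Or.inl h)
    have hΔ2 : Δ ≠ φ βlo := fun h => hΔ (Or.inr (Or.inl h))
    have hΔ3 : Δ ≠ φ βhi := fun h => hΔ (Or.inr (Or.inr h))
    -- relation between the "value" and φ
    have hval : ∀ t : ℝ, Δ + R (H t) t - R (H t) βstar = Δ - φ t := by
      intro t; simp [hφdef]; ring
    rcases eq_or_lt_of_le hbhat.1 with hble | hblt
    · -- bhat = βlo
      rw [hble] at hΔ2
      have hbhi : bhat < βhi := hble ▸ hlh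
      have hge : φ bhat ≤ Δ := by
        by_contra hcon
        push_neg at hcon
        have : bhat < ψ Δ bhat :=
          signNeg Δ bhat hbhat hbhi (by rw [hval]; linarith)
        rw [hfix] at this; exact lt_irrefl _ this
      have hgt : φ bhat < Δ := lt_of_le_of_ne hge (Ne.symm hΔ2)
      have hφcont : ContinuousAt φ bhat := (hφdiff bhat (hβpos bhat hbhat)).continuousAt
      rw [Metric.continuousAt_iff] at hφcont
      obtain ⟨ε, hεpos, hε⟩ := hφcont (Δ - φ bhat) (by linarith)
      left
      refine ⟨ε, hεpos, ?_, ?_⟩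
      · intro t ⟨ht1, ht2⟩
        exact absurd (lt_of_lt_of_le (hble ▸ ht1.2) ht2.1) (lt_irrefl t)
      · intro t ⟨ht1, ht2⟩
        have hdist : dist t bhat < ε := by
          rw [Real.dist_eq, abs_of_pos (by linarith [ht1.1])]
          linarith [ht1.2]
        have := hε hdist
        rw [Real.dist_eq, abs_lt] at this
        exact signPos Δ t ht2 (hble.symm ▸ ht1.1 : βlo < t) (by rw [hval]; linarith)
    · rcases eq_or_lt_of_le hbhat.2 with hbhe | hbhlt
      · -- bhat = βhi
        have hle : Δ ≤ φ bhat := by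
          by_contra hcon
          push_neg at hcon
          have : ψ Δ bhat < bhat :=
            signPos Δ bhat hbhat hblt (by rw [hval]; linarith)
          rw [hfix] at this; exact lt_irrefl _ this
        have hlt2 : Δ < φ bhat := lt_of_le_of_ne hle (by rw [hbhe]; exact hΔ3)
        have hφcont : ContinuousAt φ bhat := (hφdiff bhat (hβpos bhat hbhat)).continuousAt
        rw [Metric.continuousAt_iff] at hφcont
        obtain ⟨ε, hεpos, hε⟩ := hφcont (φ bhat - Δ) (by linarith)
        left
        refine ⟨ε, hεpos, ?_, ?_⟩
        · intro t ⟨ht1, ht2⟩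
          have hdist : dist t bhat < ε := by
            rw [Real.dist_eq, abs_of_neg (by linarith [ht1.2])]
            linarith [ht1.1]
          have := hε hdist
          rw [Real.dist_eq, abs_lt] at this
          exact signNeg Δ t ht2 (lt_of_lt_of_le ht1.2 hbhe.le)
            (by rw [hval]; linarith)
        · intro t ⟨ht1, ht2⟩
          exact absurd (lt_of_le_of_lt ht2.2 (hbhe ▸ ht1.1 : βhi < t)) (lt_irrefl t)
      · -- interior fixed point
        have hΔeq : Δ = φ bhat := by
          rcases lt_trichotomy Δ (φ bhat) with h | h | h
          · exfalso
            have : bhat < ψ Δ bhat :=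
              signNeg Δ bhat hbhat hbhlt (by rw [hval]; linarith)
            rw [hfix] at this; exact lt_irrefl _ this
          · exact h
          · exfalso
            have : ψ Δ bhat < bhat :=
              signPos Δ bhat hbhat hblt (by rw [hval]; linarith)
            rw [hfix] at this; exact lt_irrefl _ this
        have hdne : deriv φ bhat ≠ 0 := by
          intro h0
          exact hΔ1 ⟨bhat, ⟨hbhat, h0⟩, hΔeq.symm⟩
        have hder : HasDerivAt φ (deriv φ bhat) bhat :=
          (hφdiff bhat (hβpos bhat hbhat)).hasDerivAt
        have hslope := hasDerivAt_iff_tendsto_slope.1 hder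
        rcases hdne.lt_or_gt with hneg | hpos
        · -- derivative negative : crosses from above
          have hev : ∀ᶠ t in nhdsWithin bhat {bhat}ᶜ, slope φ bhat t < 0 :=
            hslope.eventually_lt_const hneg
          rw [Filter.Eventually, Metric.mem_nhdsWithin_iff] at hev
          obtain ⟨ε, hεpos, hε⟩ := hev
          set ε' := min ε (min (bhat - βlo) (βhi - bhat)) with hε'def
          have hε'pos : 0 < ε' := lt_min hεpos (lt_min (by linarith) (by linarith))
          have hε'ε : ε' ≤ ε := min_le_left _ _
          have hε'lo : ε' ≤ bhat - βlo := le_trans (min_le_right _ _) (min_le_left _ _)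
          have hε'hi : ε' ≤ βhi - bhat := le_trans (min_le_right _ _) (min_le_right _ _)
          left
          refine ⟨ε', hε'pos, ?_, ?_⟩
          · intro t ⟨ht1, ht2⟩
            have htne : t ≠ bhat := ne_of_lt ht1.2
            have hs : slope φ bhat t < 0 := hε ⟨Metric.mem_ball.2 (by
              rw [Real.dist_eq, abs_of_neg (by linarith [ht1.2])]
              linarith [ht1.1, hε'ε]), htne⟩
            have hts : φ t - φ bhat = slope φ bhat t * (t - bhat) := by
              rw [slope_def_field, div_mul_cancel₀ _ (sub_ne_zero.2 htne)]
            have : 0 < φ t - φ bhat := by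
              rw [hts]
              exact mul_pos_of_neg_of_neg hs (by linarith [ht1.2])
            exact signNeg Δ t ht2 (lt_trans ht1.2 hbhlt)
              (by rw [hval, hΔeq]; linarith)
          · intro t ⟨ht1, ht2⟩
            have htne : t ≠ bhat := ne_of_gt ht1.1
            have hs : slope φ bhat t < 0 := hε ⟨Metric.mem_ball.2 (by
              rw [Real.dist_eq, abs_of_pos (by linarith [ht1.1])]
              linarith [ht1.2, hε'ε]), htne⟩
            have hts : φ t - φ bhat = slope φ bhat t * (t - bhat) := by
              rw [slope_def_field, div_mul_cancel₀ _ (sub_ne_zero.2 htne)]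
            have : φ t - φ bhat < 0 := by
              rw [hts]
              exact mul_neg_of_neg_of_pos hs (by linarith [ht1.1])
            exact signPos Δ t ht2 (lt_trans hblt ht1.1)
              (by rw [hval, hΔeq]; linarith)
        · -- derivative positive : crosses from below
          have hev : ∀ᶠ t in nhdsWithin bhat {bhat}ᶜ, 0 < slope φ bhat t :=
            hslope.eventually_const_lt hpos
          rw [Filter.Eventually, Metric.mem_nhdsWithin_iff] at hev
          obtain ⟨ε, hεpos, hε⟩ := hev
          set ε' := min ε (min (bhat - βlo) (βhi - bhat)) with hε'def
          have hε'pos : 0 < ε' := lt_min hεpos (lt_min (by linarith) (by linarith))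
          have hε'ε : ε' ≤ ε := min_le_left _ _
          have hε'lo : ε' ≤ bhat - βlo := le_trans (min_le_right _ _) (min_le_left _ _)
          have hε'hi : ε' ≤ βhi - bhat := le_trans (min_le_right _ _) (min_le_right _ _)
          right
          refine ⟨ε', hε'pos, ?_, ?_⟩
          · intro t ⟨ht1, ht2⟩
            have htne : t ≠ bhat := ne_of_lt ht1.2
            have hs : 0 < slope φ bhat t := hε ⟨Metric.mem_ball.2 (by
              rw [Real.dist_eq, abs_of_neg (by linarith [ht1.2])]
              linarith [ht1.1, hε'ε]), htne⟩
            have hts : φ t - φ bhat = slope φ bhat t * (t - bhat) := by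
              rw [slope_def_field, div_mul_cancel₀ _ (sub_ne_zero.2 htne)]
            have : φ t - φ bhat < 0 := by
              rw [hts]
              exact mul_neg_of_pos_of_neg hs (by linarith [ht1.2])
            exact signPos Δ t ht2 (by linarith [ht1.1, hε'lo]) (by rw [hval, hΔeq]; linarith)
          · intro t ⟨ht1, ht2⟩
            have htne : t ≠ bhat := ne_of_gt ht1.1
            have hs : 0 < slope φ bhat t := hε ⟨Metric.mem_ball.2 (by
              rw [Real.dist_eq, abs_of_pos (by linarith [ht1.1])]
              linarith [ht1.2, hε'ε]), htne⟩
            have hts : φ t - φ bhat = slope φ bhat t * (t - bhat) := by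
              rw [slope_def_field, div_mul_cancel₀ _ (sub_ne_zero.2 htne)]
            have : 0 < φ t - φ bhat := by
              rw [hts]
              exact mul_pos hs (by linarith [ht1.1])
            exact signNeg Δ t ht2 (by linarith [ht1.2, hε'hi]) (by rw [hval, hΔeq]; linarith)
end

section
/- (Core of Proposition 4: comparison with first-order misspecification) Let β* ∈ ℝ and let f : ℝ² → ℝ be continuously differentiable on a neighborhood of (β*, β*), with f(β*, β*) = 0, ∂f/∂x(β*, β*) > 0, and ∂f/∂y(β*, β*) > 0. Then there exist δ > 0 and η > 0 such that for every Δ with 0 < |Δ| < δ: the equation f(x, x) = −Δ has a unique solution x₁(Δ) in (β* − η, β* + η), the equation f(x, β*) = −Δ has a unique solution x₂(Δ) in (β* − η, β* + η), and |x₁(Δ) − β*| < |x₂(Δ) − β*|. -/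
open Set

set_option maxHeartbeats 1000000

theorem stmt_18
    (βstar : ℝ) (f : ℝ × ℝ → ℝ)
    (U : Set (ℝ × ℝ)) (hU : U ∈ nhds ((βstar, βstar) : ℝ × ℝ))
    (hf : ContDiffOn ℝ 1 f U)
    (hf0 : f (βstar, βstar) = 0)
    (hfx : 0 < fderiv ℝ f (βstar, βstar) (1, 0))
    (hfy : 0 < fderiv ℝ f (βstar, βstar) (0, 1)) :
    ∃ δ > (0:ℝ), ∃ η > (0:ℝ), ∀ Δ : ℝ, 0 < |Δ| → |Δ| < δ →
      (∃! x : ℝ, x ∈ Ioo (βstar - η) (βstar + η) ∧ f (x, x) = -Δ) ∧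
      (∃! x : ℝ, x ∈ Ioo (βstar - η) (βstar + η) ∧ f (x, βstar) = -Δ) ∧
      ∀ x₁ x₂ : ℝ,
        x₁ ∈ Ioo (βstar - η) (βstar + η) → f (x₁, x₁) = -Δ →
        x₂ ∈ Ioo (βstar - η) (βstar + η) → f (x₂, βstar) = -Δ →
        |x₁ - βstar| < |x₂ - βstar| := by
  set L := fderiv ℝ f (βstar, βstar) with hLdef
  set a : ℝ := L (1, 0) with hadef
  set b : ℝ := L (0, 1) with hbdef
  have ha : 0 < a := hfx
  have hb : 0 < b := hfy
  set ε : ℝ := min a b / 4 with hεdef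
  have hεpos : 0 < ε := by
    have := lt_min ha hb
    positivity
  have hεa : ε ≤ a / 4 := by
    have : min a b ≤ a := min_le_left _ _
    simp only [hεdef]; linarith
  have hεb : ε ≤ b / 4 := by
    have : min a b ≤ b := min_le_right _ _
    simp only [hεdef]; linarith
  -- strict derivative
  have hstrict : HasStrictFDerivAt f L (βstar, βstar) :=
    (hf.contDiffAt hU).hasStrictFDerivAt one_ne_zero
  clear_value L
  clear hLdef
  clear_value a b ε
  have hlo := hstrict.isLittleO.def hεpos
  rw [Metric.eventually_nhds_iff] at hlo
  obtain ⟨η₁, hη₁pos, hkey0⟩ := hlo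
  obtain ⟨r, hrpos, hrU⟩ := Metric.mem_nhds_iff.mp hU
  set η : ℝ := min η₁ r / 2 with hηdef
  have hηpos : 0 < η := by positivity
  have hηη₁ : η < η₁ := by
    have : min η₁ r ≤ η₁ := min_le_left _ _
    simp only [hηdef]; linarith
  have hηr : η < r := by
    have : min η₁ r ≤ r := min_le_right _ _
    simp only [hηdef]; linarith
  clear_value η
  -- key estimate
  have key : ∀ p q : ℝ × ℝ, dist p (βstar, βstar) < η → dist q (βstar, βstar) < η →
      |f p - f q - L (p - q)| ≤ ε * ‖p - q‖ := by
    intro p q hp hq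
    have : dist ((p, q) : (ℝ×ℝ)×(ℝ×ℝ)) ((βstar, βstar), (βstar, βstar)) < η₁ := by
      rw [Prod.dist_eq]
      exact max_lt (lt_trans hp hηη₁) (lt_trans hq hηη₁)
    exact hkey0 this
  have hdist : ∀ x y : ℝ, dist ((x, y) : ℝ × ℝ) (βstar, βstar) = max |x - βstar| |y - βstar| := by
    intro x y; rw [Prod.dist_eq]; simp [Real.dist_eq]
  have hLtt : ∀ t : ℝ, L (t, t) = (a + b) * t := by
    intro t
    have h1 : ((t, t) : ℝ × ℝ) = t • ((1:ℝ), (0:ℝ)) + t • ((0:ℝ), (1:ℝ)) := by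
      simp [Prod.ext_iff]
    rw [h1, map_add, map_smul, map_smul, smul_eq_mul, smul_eq_mul, ← hadef, ← hbdef]
    ring
  have hLt0 : ∀ t : ℝ, L (t, 0) = a * t := by
    intro t
    have h1 : ((t, 0) : ℝ × ℝ) = t • ((1:ℝ), (0:ℝ)) := by simp [Prod.ext_iff]
    rw [h1, map_smul, smul_eq_mul, ← hadef]; ring
  have hntt : ∀ t : ℝ, ‖((t, t) : ℝ × ℝ)‖ = |t| := by
    intro t; rw [Prod.norm_def]; simp [Real.norm_eq_abs]
  have hnt0 : ∀ t : ℝ, ‖((t, 0) : ℝ × ℝ)‖ = |t| := by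
    intro t; rw [Prod.norm_def]; simp [Real.norm_eq_abs, abs_nonneg]
  -- estimates for the two one-variable functions
  have keyA : ∀ x x' : ℝ, |x - βstar| < η → |x' - βstar| < η →
      |f (x, x) - f (x', x') - (a + b) * (x - x')| ≤ ε * |x - x'| := by
    intro x x' hx hx'
    have h := key (x, x) (x', x') (by rw [hdist]; simpa using hx) (by rw [hdist]; simpa using hx')
    have hsub : ((x, x) : ℝ × ℝ) - (x', x') = (x - x', x - x') := rfl
    rwa [hsub, hLtt, hntt] at h
  have keyB : ∀ x x' : ℝ, |x - βstar| < η → |x' - βstar| < η →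
      |f (x, βstar) - f (x', βstar) - a * (x - x')| ≤ ε * |x - x'| := by
    intro x x' hx hx'
    have hβ : |βstar - βstar| < η := by simpa using hηpos
    have h := key (x, βstar) (x', βstar) (by rw [hdist]; exact max_lt hx hβ)
      (by rw [hdist]; exact max_lt hx' hβ)
    have hsub : ((x, βstar) : ℝ × ℝ) - (x', βstar) = (x - x', 0) := by
      simp [Prod.ext_iff]
    rwa [hsub, hLt0, hnt0] at h
  -- at the base point
  have keyA0 : ∀ x : ℝ, |x - βstar| < η →
      |f (x, x) - (a + b) * (x - βstar)| ≤ ε * |x - βstar| := by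
    intro x hx
    have := keyA x βstar hx (by simpa using hηpos)
    simpa [hf0] using this
  have keyB0 : ∀ x : ℝ, |x - βstar| < η →
      |f (x, βstar) - a * (x - βstar)| ≤ ε * |x - βstar| := by
    intro x hx
    have := keyB x βstar hx (by simpa using hηpos)
    simpa [hf0] using this
  -- continuity on the ball
  have hball : ∀ x y : ℝ, |x - βstar| < η → |y - βstar| < η → ((x, y) : ℝ × ℝ) ∈ U := by
    intro x y hx hy
    apply hrU
    rw [Metric.mem_ball, hdist]
    exact lt_trans (max_lt hx hy) hηr
  set δ : ℝ := (a - ε) * (η / 2) with hδdef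
  have haε : 0 < a - ε := by linarith
  have habε : 0 < a + b - ε := by linarith
  have hδpos : 0 < δ := by positivity
  clear_value δ
  refine ⟨δ, hδpos, η, hηpos, ?_⟩
  intro Δ hΔpos hΔδ
  have hmemIoo : ∀ x : ℝ, x ∈ Ioo (βstar - η) (βstar + η) ↔ |x - βstar| < η := by
    intro x; rw [mem_Ioo, abs_lt]; constructor <;> intro h <;> constructor <;> linarith [h.1, h.2]
  -- existence for g₁
  have hex1 : ∃ x ∈ Icc (βstar - η/2) (βstar + η/2), f (x, x) = -Δ := by
    have hconts : ContinuousOn (fun x : ℝ => f (x, x)) (Icc (βstar - η/2) (βstar + η/2)) := by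
      apply hf.continuousOn.comp (Continuous.continuousOn (by fun_prop))
      intro x hx
      rw [mem_Icc] at hx
      exact hball x x (by rw [abs_lt]; constructor <;> linarith [hx.1, hx.2, hηpos])
        (by rw [abs_lt]; constructor <;> linarith [hx.1, hx.2, hηpos])
    have hle : βstar - η/2 ≤ βstar + η/2 := by linarith
    have hlo2 : f (βstar - η/2, βstar - η/2) ≤ -Δ := by
      have h := keyA0 (βstar - η/2) (by rw [abs_lt]; constructor <;> linarith)
      have habs : |(βstar - η/2) - βstar| = η/2 := by
        rw [abs_of_nonpos (by linarith)]; ring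
      rw [habs] at h
      have h2 := abs_le.mp h
      linarith [h2.1, h2.2, le_abs_self Δ, neg_abs_le Δ, hΔδ, hδdef, mul_nonneg hb.le hηpos.le]
    have hhi2 : -Δ ≤ f (βstar + η/2, βstar + η/2) := by
      have h := keyA0 (βstar + η/2) (by rw [abs_lt]; constructor <;> linarith)
      have habs : |(βstar + η/2) - βstar| = η/2 := by
        rw [abs_of_nonneg (by linarith)]; ring
      rw [habs] at h
      have h2 := abs_le.mp h
      linarith [h2.1, h2.2, le_abs_self Δ, neg_abs_le Δ, hΔδ, hδdef, mul_nonneg hb.le hηpos.le]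
    have := intermediate_value_Icc hle hconts (mem_Icc.mpr ⟨hlo2, hhi2⟩)
    obtain ⟨x, hx, hfx'⟩ := this
    exact ⟨x, hx, hfx'⟩
  have hex2 : ∃ x ∈ Icc (βstar - η/2) (βstar + η/2), f (x, βstar) = -Δ := by
    have hconts : ContinuousOn (fun x : ℝ => f (x, βstar)) (Icc (βstar - η/2) (βstar + η/2)) := by
      apply hf.continuousOn.comp (Continuous.continuousOn (by fun_prop))
      intro x hx
      rw [mem_Icc] at hx
      exact hball x βstar (by rw [abs_lt]; constructor <;> linarith [hx.1, hx.2, hηpos])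
        (by simpa using hηpos)
    have hle : βstar - η/2 ≤ βstar + η/2 := by linarith
    have hlo2 : f (βstar - η/2, βstar) ≤ -Δ := by
      have h := keyB0 (βstar - η/2) (by rw [abs_lt]; constructor <;> linarith)
      have habs : |(βstar - η/2) - βstar| = η/2 := by
        rw [abs_of_nonpos (by linarith)]; ring
      rw [habs] at h
      have h2 := abs_le.mp h
      linarith [h2.1, h2.2, le_abs_self Δ, neg_abs_le Δ, hΔδ, hδdef, mul_nonneg hb.le hηpos.le]
    have hhi2 : -Δ ≤ f (βstar + η/2, βstar) := by
      have h := keyB0 (βstar + η/2) (by rw [abs_lt]; constructor <;> linarith)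
      have habs : |(βstar + η/2) - βstar| = η/2 := by
        rw [abs_of_nonneg (by linarith)]; ring
      rw [habs] at h
      have h2 := abs_le.mp h
      linarith [h2.1, h2.2, le_abs_self Δ, neg_abs_le Δ, hΔδ, hδdef, mul_nonneg hb.le hηpos.le]
    have := intermediate_value_Icc hle hconts (mem_Icc.mpr ⟨hlo2, hhi2⟩)
    obtain ⟨x, hx, hfx'⟩ := this
    exact ⟨x, hx, hfx'⟩
  obtain ⟨x₁, hx₁m, hx₁e⟩ := hex1
  obtain ⟨x₂, hx₂m, hx₂e⟩ := hex2
  rw [mem_Icc] at hx₁m hx₂m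
  have hx₁Ioo : x₁ ∈ Ioo (βstar - η) (βstar + η) := by
    rw [mem_Ioo]; constructor <;> linarith [hx₁m.1, hx₁m.2, hηpos]
  have hx₂Ioo : x₂ ∈ Ioo (βstar - η) (βstar + η) := by
    rw [mem_Ioo]; constructor <;> linarith [hx₂m.1, hx₂m.2, hηpos]
  refine ⟨⟨x₁, ⟨hx₁Ioo, hx₁e⟩, ?_⟩, ⟨x₂, ⟨hx₂Ioo, hx₂e⟩, ?_⟩, ?_⟩
  · rintro y ⟨hym, hye⟩
    have hy := (hmemIoo y).mp hym
    have hx := (hmemIoo x₁).mp hx₁Ioo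
    have h := keyA y x₁ hy hx
    rw [hye, hx₁e] at h
    have h2 : (a + b) * |y - x₁| ≤ ε * |y - x₁| := by
      have h1' := (abs_le.mp h).1
      have h2' := (abs_le.mp h).2
      rcases abs_cases (y - x₁) with ⟨he, _⟩ | ⟨he, _⟩ <;> rw [he] at h1' h2' ⊢ <;> linarith
    have h3 : y - x₁ = 0 := by
      by_contra hne
      have hpos : 0 < |y - x₁| := abs_pos.mpr (sub_ne_zero.mpr (fun hc => hne (by rw [hc, sub_self])))
      linarith [mul_pos habε hpos]
    linarith [sub_eq_zero.mp h3]
  · rintro y ⟨hym, hye⟩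
    have hy := (hmemIoo y).mp hym
    have hx := (hmemIoo x₂).mp hx₂Ioo
    have h := keyB y x₂ hy hx
    rw [hye, hx₂e] at h
    have h2 : a * |y - x₂| ≤ ε * |y - x₂| := by
      have h1' := (abs_le.mp h).1
      have h2' := (abs_le.mp h).2
      rcases abs_cases (y - x₂) with ⟨he, _⟩ | ⟨he, _⟩ <;> rw [he] at h1' h2' ⊢ <;> linarith
    have h3 : y - x₂ = 0 := by
      by_contra hne
      have hpos : 0 < |y - x₂| := abs_pos.mpr (sub_ne_zero.mpr (fun hc => hne (by rw [hc, sub_self])))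
      linarith [mul_pos haε hpos]
    linarith [sub_eq_zero.mp h3]
  · intro y₁ y₂ hy₁m hy₁e hy₂m hy₂e
    have hy₁ := (hmemIoo y₁).mp hy₁m
    have hy₂ := (hmemIoo y₂).mp hy₂m
    have h1 := keyA0 y₁ hy₁
    have h2 := keyB0 y₂ hy₂
    rw [hy₁e] at h1
    rw [hy₂e] at h2
    -- |Δ| ≥ (a+b-ε)|y₁-β|, |Δ| ≤ (a+ε)|y₂-β|
    have hub : (a + b - ε) * |y₁ - βstar| ≤ |Δ| := by
      have ha' := (abs_le.mp h1).1
      have hb' := (abs_le.mp h1).2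
      rcases abs_cases (y₁ - βstar) with ⟨he, _⟩ | ⟨he, _⟩ <;> rw [he] at ha' hb' ⊢ <;>
        linarith [le_abs_self Δ, neg_abs_le Δ]
    have hlb : |Δ| ≤ (a + ε) * |y₂ - βstar| := by
      have h4 := abs_add_le (-Δ - a * (y₂ - βstar)) (a * (y₂ - βstar))
      have h5 : (-Δ - a * (y₂ - βstar)) + a * (y₂ - βstar) = -Δ := by ring
      rw [h5, abs_neg] at h4
      have h6 : |a * (y₂ - βstar)| = a * |y₂ - βstar| := by
        rw [abs_mul, abs_of_pos ha]
      linarith [h2, h4, h6]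
    have hy₂pos : 0 < |y₂ - βstar| := by
      by_contra hc
      push_neg at hc
      have h0 : |y₂ - βstar| = 0 := le_antisymm hc (abs_nonneg _)
      rw [h0, mul_zero] at hlb
      linarith
    nlinarith [hub, hlb, hy₂pos, abs_nonneg (y₁ - βstar), habε,
      mul_pos (show (0:ℝ) < b - 2*ε by linarith) hy₂pos]
end
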